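/- For the modified epoch-triggering rule where a new epoch starts when ν_e(s,a) ≥ N_e(s,a)/M for some (s,a), the total number of epochs E up to time T ≥ SA is bounded by E ≤ 1 + SA + SA·log_{1+1/M}(T/(SA)), which is at most 1 + SA + M·SA·log₂(T/(SA)). -/

import Mathlib

set_option maxHeartbeats 2000000 in
/-- Modified epoch-triggering rule: a new epoch starts when `ν_e(s,a) ≥ max(1, N_e(s,a)/M)`
for some `(s,a)`. Then `E ≤ 1 + SA + SA·log_{1+1/M}(T/(SA)) ≤ 1 + SA + M·SA·log₂(T/(SA))`. -/
theorem stmt_5 (S A T E : ℕ) (M : ℝ) (hM : 1 ≤ M)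
    (hS : 0 < S) (hA : 0 < A) (hT : S * A ≤ T)
    (ν N : ℕ → Fin S → Fin A → ℕ)
    (hN : ∀ e s a, N e s a = ∑ e' ∈ Finset.range e, ν e' s a)
    (htot : ∑ e ∈ Finset.range E, ∑ s, ∑ a, ν e s a = T)
    (htrig : ∀ e, e + 1 < E → ∃ s a, max 1 ((N e s a : ℝ) / M) ≤ (ν e s a : ℝ)) :
    (E : ℝ) ≤ 1 + S * A + S * A * Real.logb (1 + 1 / M) ((T : ℝ) / (S * A)) ∧
    1 + (S : ℝ) * A + S * A * Real.logb (1 + 1 / M) ((T : ℝ) / (S * A)) ≤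
      1 + S * A + M * (S * A) * Real.logb 2 ((T : ℝ) / (S * A)) := by
  classical
  have hM0 : (0:ℝ) < M := lt_of_lt_of_le one_pos hM
  set b : ℝ := 1 + 1 / M with hbdef
  have hb1 : 1 < b := by
    have : (0:ℝ) < 1 / M := by positivity
    simp only [hbdef]; linarith
  have hb0 : (0:ℝ) < b := by linarith
  have hL : 0 < Real.log b := Real.log_pos hb1
  set L : ℝ := Real.log b with hLdef
  have hc0 : (0:ℝ) < (S:ℝ) * A := by positivity
  set c : ℝ := (S:ℝ) * A with hcdef
  set μ : ℝ := (T:ℝ) / c with hmudef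
  have hcT : c ≤ (T:ℝ) := by
    have : ((S * A : ℕ) : ℝ) ≤ (T:ℝ) := by exact_mod_cast hT
    push_cast at this; rw [hcdef]; linarith
  have hμ1 : (1:ℝ) ≤ μ := by
    rw [hmudef, le_div_iff₀ hc0]; linarith
  have hμ0 : (0:ℝ) < μ := lt_of_lt_of_le one_pos hμ1
  have hlogμ0 : 0 ≤ Real.log μ := Real.log_nonneg hμ1
  have hTcμ : (T:ℝ) = c * μ := by
    rw [hmudef]; field_simp
  -- `log μ ≥ 1 - 1/μ`
  have hlog_lb : 1 - 1 / μ ≤ Real.log μ := by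
    have h := Real.log_le_sub_one_of_pos (x := 1/μ) (by positivity)
    rw [one_div, Real.log_inv] at h
    have : 1 / μ = μ⁻¹ := one_div μ
    rw [this]; linarith
  have hlogb_eq : Real.logb b μ = Real.log μ / L := by rw [Real.logb]
  constructor
  · -- main bound
    -- total counts per pair
    set n : Fin S → Fin A → ℕ := fun s a => ∑ e ∈ Finset.range E, ν e s a with hndef
    have hntot : ∑ p : Fin S × Fin A, (n p.1 p.2 : ℝ) = (T:ℝ) := by
      have h1 : ∑ p : Fin S × Fin A, n p.1 p.2 = T := by
        rw [Fintype.sum_prod_type]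
        simp only [hndef]
        calc ∑ s : Fin S, ∑ a : Fin A, ∑ e ∈ Finset.range E, ν e s a
            = ∑ s : Fin S, ∑ e ∈ Finset.range E, ∑ a : Fin A, ν e s a :=
              Finset.sum_congr rfl fun s _ => Finset.sum_comm
          _ = ∑ e ∈ Finset.range E, ∑ s : Fin S, ∑ a : Fin A, ν e s a := Finset.sum_comm
          _ = T := htot
      exact_mod_cast h1
    have hmono : ∀ s a, Monotone fun e => N e s a := by
      intro s a e e' h
      simp only [hN]
      exact Finset.sum_le_sum_of_subset (Finset.range_subset_range.2 h)
    -- trigger pair choice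
    have key : ∀ e, e + 1 < E →
        ∃ p : Fin S × Fin A, max 1 ((N e p.1 p.2 : ℝ) / M) ≤ (ν e p.1 p.2 : ℝ) := by
      intro e he; obtain ⟨s, a, h⟩ := htrig e he; exact ⟨(s, a), h⟩
    set f : ℕ → Fin S × Fin A :=
      fun e => if h : e + 1 < E then (key e h).choose else (⟨0, hS⟩, ⟨0, hA⟩) with hfdef
    have hf : ∀ e, e + 1 < E →
        max 1 ((N e (f e).1 (f e).2 : ℝ) / M) ≤ (ν e (f e).1 (f e).2 : ℝ) := by
      intro e he
      simp only [hfdef, dif_pos he]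
      exact (key e he).choose_spec
    set K : Fin S × Fin A → ℕ :=
      fun p => ((Finset.range (E - 1)).filter fun e => f e = p).card with hKdef
    have hKsum : ∑ p : Fin S × Fin A, K p = E - 1 := by
      have h := Finset.card_eq_sum_card_fiberwise
        (s := Finset.range (E - 1)) (t := (Finset.univ : Finset (Fin S × Fin A)))
        (f := f) (fun x _ => Finset.mem_univ _)
      rw [Finset.card_range] at h
      exact h.symm
    -- within the trigger set, facts about membership
    have hmem : ∀ p : Fin S × Fin A, ∀ e ∈ (Finset.range (E - 1)).filter fun e => f e = p,
        e + 1 < E ∧ max 1 ((N e p.1 p.2 : ℝ) / M) ≤ (ν e p.1 p.2 : ℝ) := by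
      intro p e he
      rw [Finset.mem_filter, Finset.mem_range] at he
      have he1 : e + 1 < E := by omega
      refine ⟨he1, ?_⟩
      have := hf e he1
      rw [he.2] at this
      exact this
    -- fact (i): K p ≤ n p
    have hKn : ∀ p : Fin S × Fin A, K p ≤ n p.1 p.2 := by
      intro p
      have h1 : ∀ e ∈ (Finset.range (E - 1)).filter fun e => f e = p, 1 ≤ ν e p.1 p.2 := by
        intro e he
        have h := (hmem p e he).2
        have h2 : (1:ℝ) ≤ (ν e p.1 p.2 : ℝ) := le_trans (le_max_left _ _) h
        exact_mod_cast h2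
      calc K p = ((Finset.range (E - 1)).filter fun e => f e = p).card := rfl
        _ = ∑ e ∈ (Finset.range (E - 1)).filter fun e => f e = p, 1 :=
            Finset.card_eq_sum_ones _
        _ ≤ ∑ e ∈ (Finset.range (E - 1)).filter fun e => f e = p, ν e p.1 p.2 :=
            Finset.sum_le_sum h1
        _ ≤ ∑ e ∈ Finset.range E, ν e p.1 p.2 := by
            apply Finset.sum_le_sum_of_subset
            intro e he
            rw [Finset.mem_filter, Finset.mem_range] at he
            rw [Finset.mem_range]; omega
        _ = n p.1 p.2 := rfl
    -- growth lemma
    have grow : ∀ (p : Fin S × Fin A) (k : ℕ) (F : Finset ℕ), F.card = k →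
        (∀ e ∈ F, e + 1 < E ∧ max 1 ((N e p.1 p.2 : ℝ) / M) ≤ (ν e p.1 p.2 : ℝ)) →
        ∀ hne : F.Nonempty, b ^ (F.card - 1) ≤ (N (F.max' hne + 1) p.1 p.2 : ℝ) := by
      intro p k
      induction k with
      | zero =>
        intro F hF _ hne
        exact absurd hF (by simpa using hne.card_pos.ne')
      | succ k ih =>
        intro F hcard hprop hne
        set m := F.max' hne with hmdef
        have hm : m ∈ F := F.max'_mem hne
        have htr := (hprop m hm).2
        have hstep : (N m p.1 p.2 : ℝ) + max 1 ((N m p.1 p.2 : ℝ) / M)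
            ≤ (N (m + 1) p.1 p.2 : ℝ) := by
          have hNm : N (m + 1) p.1 p.2 = N m p.1 p.2 + ν m p.1 p.2 := by
            rw [hN, hN, Finset.sum_range_succ]
          rw [hNm]; push_cast; linarith [htr]
        by_cases hF' : (F.erase m).Nonempty
        · have hm'mem := (F.erase m).max'_mem hF'
          set m' := (F.erase m).max' hF' with hm'def
          have hm'F : m' ∈ F := Finset.mem_of_mem_erase hm'mem
          have hm'ne : m' ≠ m := Finset.ne_of_mem_erase hm'mem
          have hm'le : m' ≤ m := F.le_max' m' hm'F
          have hlt : m' < m := lt_of_le_of_ne hm'le hm'ne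
          have hcard' : (F.erase m).card = k := by
            rw [Finset.card_erase_of_mem hm]; omega
          have hk1 : 1 ≤ k := by
            have := hF'.card_pos
            omega
          have ihh := ih (F.erase m) hcard'
            (fun e he => hprop e (Finset.mem_of_mem_erase he)) hF'
          rw [hcard'] at ihh
          have h1 : (b:ℝ) ^ (k - 1) ≤ (N m p.1 p.2 : ℝ) := by
            refine le_trans ihh ?_
            have hmono' := hmono p.1 p.2 (by omega : m' + 1 ≤ m)
            exact_mod_cast hmono'
          have h2 : (N m p.1 p.2 : ℝ) * b ≤ (N (m + 1) p.1 p.2 : ℝ) := by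
            have hmax : (N m p.1 p.2 : ℝ) / M ≤ max 1 ((N m p.1 p.2 : ℝ) / M) :=
              le_max_right _ _
            have hNnn : (0:ℝ) ≤ (N m p.1 p.2 : ℝ) := Nat.cast_nonneg _
            have : (N m p.1 p.2 : ℝ) * b
                = (N m p.1 p.2 : ℝ) + (N m p.1 p.2 : ℝ) / M := by
              rw [hbdef]; field_simp
            rw [this]
            linarith
          have hcc : F.card - 1 = k := by omega
          rw [hcc]
          have hbk : b ^ k = b ^ (k - 1) * b := by
            conv_lhs => rw [show k = (k - 1) + 1 by omega]
            rw [pow_succ]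
          rw [hbk]
          calc b ^ (k - 1) * b ≤ (N m p.1 p.2 : ℝ) * b :=
                mul_le_mul_of_nonneg_right h1 hb0.le
            _ ≤ _ := h2
        · have hcard1 : F.card = 1 := by
            have h0 : (F.erase m).card = F.card - 1 := Finset.card_erase_of_mem hm
            rw [Finset.not_nonempty_iff_eq_empty] at hF'
            rw [hF', Finset.card_empty] at h0
            have := hne.card_pos
            omega
          rw [hcard1]
          simp only [Nat.sub_self, pow_zero]
          have h1 : (1:ℝ) ≤ max 1 ((N m p.1 p.2 : ℝ) / M) := le_max_left _ _
          have hNnn : (0:ℝ) ≤ (N m p.1 p.2 : ℝ) := Nat.cast_nonneg _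
          linarith
    -- fact (ii): if K p ≥ 1 then b^(K p - 1) ≤ n p
    have hKgrow : ∀ p : Fin S × Fin A, 1 ≤ K p → b ^ (K p - 1) ≤ (n p.1 p.2 : ℝ) := by
      intro p hKp
      set F := (Finset.range (E - 1)).filter fun e => f e = p with hFdef
      have hne : F.Nonempty := by
        rw [← Finset.card_pos]; exact hKp
      have hg := grow p F.card F rfl (hmem p) hne
      refine le_trans hg ?_
      have hmax := F.max'_mem hne
      have h1 := (hmem p _ hmax).1
      have h2 : F.max' hne + 1 ≤ E := by omega
      have := hmono p.1 p.2 h2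
      have hNE : N E p.1 p.2 = n p.1 p.2 := hN E p.1 p.2
      rw [← hNE]
      exact_mod_cast this
    -- E ≤ 1 + (E-1)
    have hE1 : (E:ℝ) ≤ 1 + ((E - 1 : ℕ) : ℝ) := by
      have : E ≤ 1 + (E - 1) := by omega
      exact_mod_cast this
    have hcard_univ : (Finset.univ : Finset (Fin S × Fin A)).card = S * A := by
      simp [Fintype.card_prod]
    by_cases hcase : μ ≤ 1 + Real.log μ / L
    · -- Case A: E - 1 ≤ T ≤ c(1 + log μ / L)
      have hsum1 : ((E - 1 : ℕ) : ℝ) ≤ (T:ℝ) := by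
        have h1 : (E - 1 : ℕ) ≤ ∑ p : Fin S × Fin A, n p.1 p.2 := by
          rw [← hKsum]
          exact Finset.sum_le_sum fun p _ => hKn p
        have h2 : ∑ p : Fin S × Fin A, n p.1 p.2 = T := by
          have := hntot; exact_mod_cast this
        rw [h2] at h1
        exact_mod_cast h1
      rw [hlogb_eq]
      have hfin : (T:ℝ) ≤ c * (1 + Real.log μ / L) := by
        rw [hTcμ]
        exact mul_le_mul_of_nonneg_left hcase hc0.le
      calc (E:ℝ) ≤ 1 + ((E - 1 : ℕ) : ℝ) := hE1
        _ ≤ 1 + (T:ℝ) := by linarith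
        _ ≤ 1 + c * (1 + Real.log μ / L) := by linarith
        _ = 1 + c + c * (Real.log μ / L) := by ring
    · -- Case B
      push_neg at hcase
      have hLμ : 1 ≤ L * μ := by
        by_contra h
        push_neg at h
        have hLle : L ≤ 1 / μ := by
          rw [le_div_iff₀ hμ0]; linarith
        have h1 : L * (μ - 1) ≤ (1 / μ) * (μ - 1) :=
          mul_le_mul_of_nonneg_right hLle (by linarith)
        have h2 : (1 / μ) * (μ - 1) = 1 - 1 / μ := by field_simp
        have h3 : L * (μ - 1) ≤ Real.log μ := (h1.trans_eq h2).trans hlog_lb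
        have h4 : μ - 1 ≤ Real.log μ / L := by
          rw [le_div_iff₀ hL]; linarith [h3]
        linarith
      have hμL : 1 / L ≤ μ := by
        rw [div_le_iff₀ hL]; linarith [hLμ, mul_comm L μ]
      have hlogμL : 1 - L ≤ Real.log μ := by
        have h1 : Real.log (1 / L) ≤ Real.log μ :=
          Real.log_le_log (by positivity) hμL
        rw [one_div, Real.log_inv] at h1
        have h2 : Real.log L ≤ L - 1 := Real.log_le_sub_one_of_pos hL
        linarith
      -- pointwise bound
      have hpoint : ∀ p : Fin S × Fin A,
          (K p : ℝ) ≤ 1 + Real.log μ / L + ((n p.1 p.2 : ℝ) - μ) / (L * μ) := by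
        intro p
        have hLμ0 : (0:ℝ) < L * μ := by positivity
        rcases Nat.eq_zero_or_pos (n p.1 p.2) with hn0 | hn1
        · have hK0 : K p = 0 := by have := hKn p; omega
          rw [hK0, hn0]
          push_cast
          have hLne : L ≠ 0 := ne_of_gt hL
          have hμne : μ ≠ 0 := ne_of_gt hμ0
          have h1 : 1 + Real.log μ / L + ((0:ℝ) - μ) / (L * μ)
              = (L + Real.log μ - 1) / L := by
            field_simp
            ring
          rw [h1]
          exact div_nonneg (by linarith) hL.le
        · have hn1' : (1:ℝ) ≤ (n p.1 p.2 : ℝ) := by exact_mod_cast hn1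
          rcases Nat.eq_zero_or_pos (K p) with hK0 | hK1
          · rw [hK0]
            push_cast
            have hLne : L ≠ 0 := ne_of_gt hL
            have hμne : μ ≠ 0 := ne_of_gt hμ0
            have h1 : (1 - μ) / (L * μ) ≤ ((n p.1 p.2 : ℝ) - μ) / (L * μ) :=
              (div_le_div_iff_of_pos_right hLμ0).mpr (by linarith)
            have h3 : 1 + Real.log μ / L + (1 - μ) / (L * μ)
                = (L * μ + μ * Real.log μ + 1 - μ) / (L * μ) := by
              field_simp
              ring
            have ha : μ * (1 - 1 / μ) ≤ μ * Real.log μ :=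
              mul_le_mul_of_nonneg_left hlog_lb hμ0.le
            have hb' : μ * (1 - 1 / μ) = μ - 1 := by field_simp
            have h2 : 0 ≤ 1 + Real.log μ / L + (1 - μ) / (L * μ) := by
              rw [h3]
              apply div_nonneg _ hLμ0.le
              nlinarith [hLμ0.le]
            linarith
          · have hg := hKgrow p hK1
            have hlog1 : ((K p - 1 : ℕ) : ℝ) * L ≤ Real.log (n p.1 p.2 : ℝ) := by
              have := Real.log_le_log (by positivity : (0:ℝ) < b ^ (K p - 1)) hg
              rw [Real.log_pow] at this
              exact this
            have hcast : ((K p - 1 : ℕ) : ℝ) = (K p : ℝ) - 1 := by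
              have : 1 ≤ K p := hK1
              push_cast [Nat.cast_sub this]
              ring
            have hlog2' : Real.log (n p.1 p.2 : ℝ)
                ≤ Real.log μ + ((n p.1 p.2 : ℝ) - μ) / μ := by
              have h1 : Real.log ((n p.1 p.2 : ℝ) / μ) ≤ (n p.1 p.2 : ℝ) / μ - 1 :=
                Real.log_le_sub_one_of_pos (by positivity)
              rw [Real.log_div (by positivity) (ne_of_gt hμ0)] at h1
              have h2 : (n p.1 p.2 : ℝ) / μ - 1 = ((n p.1 p.2 : ℝ) - μ) / μ := by
                field_simp
              linarith [h1, h2.le, h2.symm.le]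
            have hfinal : (K p : ℝ) - 1 ≤ Real.log μ / L + ((n p.1 p.2 : ℝ) - μ) / (L * μ) := by
              rw [hcast] at hlog1
              have h3 : ((K p : ℝ) - 1) * L ≤ Real.log μ + ((n p.1 p.2 : ℝ) - μ) / μ := by
                linarith
              have h4 : (K p : ℝ) - 1 ≤ (Real.log μ + ((n p.1 p.2 : ℝ) - μ) / μ) / L := by
                rw [le_div_iff₀ hL]; linarith
              have h5 : (Real.log μ + ((n p.1 p.2 : ℝ) - μ) / μ) / L
                  = Real.log μ / L + ((n p.1 p.2 : ℝ) - μ) / (L * μ) := by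
                field_simp
              linarith [h4, h5.le, h5.symm.le]
            linarith
      -- sum up
      have hsum : ((E - 1 : ℕ) : ℝ) ≤ c * (1 + Real.log μ / L) := by
        have h1 : ∑ p : Fin S × Fin A, (K p : ℝ) = ((E - 1 : ℕ) : ℝ) := by
          rw [← hKsum]; push_cast; rfl
        have h2 := Finset.sum_le_sum fun p (_ : p ∈ Finset.univ) => hpoint p
        rw [h1] at h2
        have h3 : ∑ p : Fin S × Fin A,
            (1 + Real.log μ / L + ((n p.1 p.2 : ℝ) - μ) / (L * μ))
            = c * (1 + Real.log μ / L) + ((T:ℝ) - c * μ) / (L * μ) := by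
          rw [Finset.sum_add_distrib, Finset.sum_const, hcard_univ, ← Finset.sum_div,
            Finset.sum_sub_distrib, hntot, Finset.sum_const, hcard_univ]
          push_cast
          rw [hcdef]
          ring
        rw [h3] at h2
        rw [hTcμ] at h2
        simp only [sub_self, zero_div, add_zero] at h2
        exact h2
      rw [hlogb_eq]
      calc (E:ℝ) ≤ 1 + ((E - 1 : ℕ) : ℝ) := hE1
        _ ≤ 1 + c * (1 + Real.log μ / L) := by linarith
        _ = 1 + c + c * (Real.log μ / L) := by ring
  · -- second conjunct
    have hBern : Real.log 2 ≤ M * L := by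
      have hs : (-1:ℝ) ≤ 1 / M := le_trans (by norm_num) (by positivity : (0:ℝ) ≤ 1 / M)
      have h1 : (1:ℝ) + M * (1 / M) ≤ (1 + 1 / M) ^ (M:ℝ) :=
        one_add_mul_self_le_rpow_one_add hs hM
      have h2 : (1:ℝ) + M * (1 / M) = 2 := by
        field_simp
        norm_num
      have h3 : (2:ℝ) ≤ b ^ (M:ℝ) := by rw [hbdef, ← h2]; exact h1
      calc Real.log 2 ≤ Real.log (b ^ (M:ℝ)) := Real.log_le_log (by norm_num) h3
        _ = M * L := by rw [Real.log_rpow hb0]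
    have hlog2 : (0:ℝ) < Real.log 2 := Real.log_pos (by norm_num)
    have hkey : Real.logb b μ ≤ M * Real.logb 2 μ := by
      rw [hlogb_eq, Real.logb]
      rw [div_le_iff₀ hL]
      have h1 : M * (Real.log μ / Real.log 2) * L = Real.log μ * (M * L) / Real.log 2 := by
        ring
      rw [h1, le_div_iff₀ hlog2]
      calc Real.log μ * Real.log 2 ≤ Real.log μ * (M * L) :=
          mul_le_mul_of_nonneg_left hBern hlogμ0
        _ = Real.log μ * (M * L) := rfl
    have h2 : c * Real.logb b μ ≤ M * c * Real.logb 2 μ := by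
      calc c * Real.logb b μ ≤ c * (M * Real.logb 2 μ) :=
          mul_le_mul_of_nonneg_left hkey hc0.le
        _ = M * c * Real.logb 2 μ := by ring
    linarith
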